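/- Suppose for some δ ∈ (0,1), n ∈ ℕ⁺, C > 0 the detectability inequality ‖φ_n(0;ψ)‖² ≤ 2δ²‖ψ‖² + 2C²‖B(·)*φ_n(·;ψ)‖²_{L²(0,nT;U)} holds for all ψ ∈ Y, with 2δ² < 1. Then for every k ∈ ℕ⁺ and z ∈ Y, ‖φ_{kn}(0;z)‖² ≤ (2δ²)^k‖z‖² + 2C²‖B(·)*φ_{kn}(·;z)‖²_{L²(0,knT;U)}, where φ_{kn}(·;z) solves the adjoint equation on [0,knT] with terminal condition z at time knT. -/

import Mathlib

open MeasureTheory Real Filter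

section AuxDetect

variable {Y U : Type*} [NormedAddCommGroup Y] [InnerProductSpace ℝ Y] [CompleteSpace Y]
  [NormedAddCommGroup U] [InnerProductSpace ℝ U] [CompleteSpace U]

/-- polarization identity for the observation integrand -/
lemma obs_polarization (Φ : ℝ → ℝ → Y →L[ℝ] Y) (B : ℝ → U →L[ℝ] Y) (L t : ℝ)
    (ψ ψ0 : Y) (c : ℝ) (hc : c ≠ 0) :
    ‖ContinuousLinearMap.adjoint (B t) (ContinuousLinearMap.adjoint (Φ L t) ψ0)‖ ^ 2 =
      (2 * c ^ 2)⁻¹ *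
        ((‖ContinuousLinearMap.adjoint (B t) (ContinuousLinearMap.adjoint (Φ L t) (ψ + c • ψ0))‖ ^ 2 +
          ‖ContinuousLinearMap.adjoint (B t) (ContinuousLinearMap.adjoint (Φ L t) (ψ - c • ψ0))‖ ^ 2) -
          2 * ‖ContinuousLinearMap.adjoint (B t) (ContinuousLinearMap.adjoint (Φ L t) ψ)‖ ^ 2) := by
  set X := ContinuousLinearMap.adjoint (B t) (ContinuousLinearMap.adjoint (Φ L t) ψ) with hX
  set Z := ContinuousLinearMap.adjoint (B t) (ContinuousLinearMap.adjoint (Φ L t) ψ0) with hZ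
  have e1 : ContinuousLinearMap.adjoint (B t) (ContinuousLinearMap.adjoint (Φ L t) (ψ + c • ψ0)) = X + c • Z := by
    simp [hX, hZ, map_add, _root_.map_smul]
  have e2 : ContinuousLinearMap.adjoint (B t) (ContinuousLinearMap.adjoint (Φ L t) (ψ - c • ψ0)) = X - c • Z := by
    simp [hX, hZ, map_sub, _root_.map_smul]
  rw [e1, e2]
  have hpar := parallelogram_law_with_norm ℝ X (c • Z)
  have hsm : ‖c • Z‖ = |c| * ‖Z‖ := by rw [norm_smul]; simp
  have habs : |c| * |c| = c^2 := by rw [← abs_mul, abs_mul_self]; ring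
  have hc2 : c^2 ≠ 0 := pow_ne_zero _ hc
  have key : ‖X + c • Z‖^2 + ‖X - c • Z‖^2 = 2*‖X‖^2 + 2*(c^2*‖Z‖^2) := by
    rw [hsm] at hpar
    rw [pow_two, pow_two, pow_two, pow_two]
    linear_combination hpar - 2*‖Z‖*‖Z‖*habs + 4*‖Z‖^2*(sq_abs c)
  rw [key]
  field_simp
  ring

end AuxDetect

set_option maxHeartbeats 2000000 in
/-- iterating the one-period (squared) detectability inequality.
Here `φ_m(t;ψ) = Φ(mT,t)*ψ` and `B(·)*φ_m(·;ψ)` is the observation. -/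
theorem iterated_detectability
    {Y U : Type*} [NormedAddCommGroup Y] [InnerProductSpace ℝ Y] [CompleteSpace Y]
    [NormedAddCommGroup U] [InnerProductSpace ℝ U] [CompleteSpace U]
    (T : ℝ) (hT : 0 < T) (n : ℕ) (hn : 0 < n)
    (δ C : ℝ) (hδ : δ ∈ Set.Ioo (0:ℝ) 1) (h2δ : 2 * δ ^ 2 < 1) (hC : 0 < C)
    (Φ : ℝ → ℝ → Y →L[ℝ] Y) (B : ℝ → U →L[ℝ] Y)
    (hcomp : ∀ s r t : ℝ, 0 ≤ s → s ≤ r → r ≤ t → Φ t s = (Φ t r).comp (Φ r s))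
    (hΦper : ∀ s t : ℝ, 0 ≤ s → s ≤ t → Φ (t + T) (s + T) = Φ t s)
    (hBper : ∀ t : ℝ, 0 ≤ t → B (t + T) = B t)
    (hbase : ∀ ψ : Y,
      ‖ContinuousLinearMap.adjoint (Φ ((n : ℝ) * T) 0) ψ‖ ^ 2 ≤
        2 * δ ^ 2 * ‖ψ‖ ^ 2 + 2 * C ^ 2 *
          ∫ t in Set.Ioc (0:ℝ) ((n : ℝ) * T),
            ‖ContinuousLinearMap.adjoint (B t)
              (ContinuousLinearMap.adjoint (Φ ((n : ℝ) * T) t) ψ)‖ ^ 2) :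
    ∀ k : ℕ, 0 < k → ∀ z : Y,
      ‖ContinuousLinearMap.adjoint (Φ (((k * n : ℕ) : ℝ) * T) 0) z‖ ^ 2 ≤
        (2 * δ ^ 2) ^ k * ‖z‖ ^ 2 + 2 * C ^ 2 *
          ∫ t in Set.Ioc (0:ℝ) (((k * n : ℕ) : ℝ) * T),
            ‖ContinuousLinearMap.adjoint (B t)
              (ContinuousLinearMap.adjoint (Φ (((k * n : ℕ) : ℝ) * T) t) z)‖ ^ 2 := by
  classical
  obtain ⟨hδ0, hδ1⟩ := hδ
  set L : ℝ := (n : ℝ) * T with hLdef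
  have hL0 : 0 < L := by positivity
  have h2δ0 : (0:ℝ) < 2 * δ ^ 2 := by positivity
  -- iterated periodicity of Φ over m periods of length T
  have hΦmT : ∀ m : ℕ, ∀ s t : ℝ, 0 ≤ s → s ≤ t → Φ (t + m * T) (s + m * T) = Φ t s := by
    intro m
    induction m with
    | zero => intro s t _ _; norm_num
    | succ m ih =>
      intro s t hs hst
      have hmT : (0:ℝ) ≤ (m:ℝ) * T := by positivity
      have h1 : Φ (t + m*T + T) (s + m*T + T) = Φ (t + m*T) (s + m*T) :=
        hΦper (s + m*T) (t + m*T) (by linarith) (by linarith)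
      have e : ((m+1 : ℕ):ℝ) * T = (m:ℝ)*T + T := by push_cast; ring
      calc Φ (t + ((m+1:ℕ):ℝ) * T) (s + ((m+1:ℕ):ℝ) * T)
          = Φ (t + (m:ℝ)*T + T) (s + (m:ℝ)*T + T) := by rw [e]; ring_nf
        _ = Φ (t + (m:ℝ)*T) (s + (m:ℝ)*T) := h1
        _ = Φ t s := ih s t hs hst
  have hBmT : ∀ m : ℕ, ∀ t : ℝ, 0 ≤ t → B (t + m * T) = B t := by
    intro m
    induction m with
    | zero => intro t _; norm_num
    | succ m ih =>
      intro t ht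
      have hmT : (0:ℝ) ≤ (m:ℝ) * T := by positivity
      have e : ((m+1 : ℕ):ℝ) * T = (m:ℝ)*T + T := by push_cast; ring
      calc B (t + ((m+1:ℕ):ℝ) * T) = B (t + (m:ℝ)*T + T) := by rw [e]; ring_nf
        _ = B (t + (m:ℝ)*T) := hBper (t + (m:ℝ)*T) (by linarith)
        _ = B t := ih t ht
  -- periodicity over one block of length L
  have hΦL : ∀ s t : ℝ, 0 ≤ s → s ≤ t → Φ (t + L) (s + L) = Φ t s := fun s t hs hst =>
    hΦmT n s t hs hst
  have hBL : ∀ t : ℝ, 0 ≤ t → B (t + L) = B t := fun t ht => hBmT n t ht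
  by_cases hS : ∀ ψ : Y, IntegrableOn
      (fun t => ‖ContinuousLinearMap.adjoint (B t)
        (ContinuousLinearMap.adjoint (Φ L t) ψ)‖ ^ 2) (Set.Ioc 0 L) volume
  · -- integrable case: full induction with the integral splitting
    have main : ∀ k : ℕ, 0 < k → ∀ z : Y,
        IntegrableOn (fun t => ‖ContinuousLinearMap.adjoint (B t)
            (ContinuousLinearMap.adjoint (Φ ((k:ℝ) * L) t) z)‖ ^ 2)
          (Set.Ioc 0 ((k:ℝ) * L)) volume ∧
        ‖ContinuousLinearMap.adjoint (Φ ((k:ℝ) * L) 0) z‖ ^ 2 ≤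
          (2 * δ ^ 2) ^ k * ‖z‖ ^ 2 + 2 * C ^ 2 *
            ∫ t in Set.Ioc (0:ℝ) ((k:ℝ) * L),
              ‖ContinuousLinearMap.adjoint (B t)
                (ContinuousLinearMap.adjoint (Φ ((k:ℝ) * L) t) z)‖ ^ 2 := by
      intro k
      induction k with
      | zero => intro h; exact absurd h (lt_irrefl 0)
      | succ k ih =>
        intro _ z
        rcases Nat.eq_zero_or_pos k with hk0 | hk0
        · subst hk0
          have e1 : ((0+1 : ℕ):ℝ) * L = L := by norm_num
          rw [e1]
          refine ⟨hS z, ?_⟩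
          simpa using hbase z
        · obtain ⟨intG, ineqG⟩ := ih hk0 z
          set a : ℝ := (k:ℝ) * L with hadef
          have ha0 : 0 < a := by positivity
          have ecast : ((k+1 : ℕ):ℝ) * L = a + L := by push_cast [hadef]; ring
          rw [ecast]
          have hsplit : Φ (a + L) 0 = (Φ (a+L) L).comp (Φ L 0) :=
            hcomp 0 L (a+L) le_rfl hL0.le (by linarith)
          have hperA : Φ (a+L) L = Φ a 0 := by
            have := hΦL 0 a le_rfl ha0.le
            simpa using this
          set ψ : Y := ContinuousLinearMap.adjoint (Φ a 0) z with hψdef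
          have happly : ContinuousLinearMap.adjoint (Φ (a+L) 0) z =
              ContinuousLinearMap.adjoint (Φ L 0) ψ := by
            rw [hsplit, ContinuousLinearMap.adjoint_comp, hperA]
            rfl
          have hpt1 : ∀ t ∈ Set.Ioc (0:ℝ) L,
              ‖ContinuousLinearMap.adjoint (B t)
                (ContinuousLinearMap.adjoint (Φ L t) ψ)‖ ^ 2 =
              ‖ContinuousLinearMap.adjoint (B t)
                (ContinuousLinearMap.adjoint (Φ (a+L) t) z)‖ ^ 2 := by
            intro t ht
            have h1 : Φ (a+L) t = (Φ (a+L) L).comp (Φ L t) :=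
              hcomp t L (a+L) ht.1.le ht.2 (by linarith)
            rw [h1, ContinuousLinearMap.adjoint_comp, hperA]
            rfl
          have hpt2 : ∀ t ∈ Set.Ioc (0:ℝ) a,
              ‖ContinuousLinearMap.adjoint (B t)
                (ContinuousLinearMap.adjoint (Φ a t) z)‖ ^ 2 =
              ‖ContinuousLinearMap.adjoint (B (t+L))
                (ContinuousLinearMap.adjoint (Φ (a+L) (t+L)) z)‖ ^ 2 := by
            intro t ht
            rw [hBL t ht.1.le, hΦL t a ht.1.le ht.2]
          -- integrability on the first block
          have int1 : IntegrableOn (fun t => ‖ContinuousLinearMap.adjoint (B t)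
              (ContinuousLinearMap.adjoint (Φ (a+L) t) z)‖ ^ 2) (Set.Ioc 0 L) volume :=
            (hS ψ).congr_fun (fun t ht => hpt1 t ht) measurableSet_Ioc
          -- integrability on the second block, via translation
          have intShift : IntegrableOn (fun t => ‖ContinuousLinearMap.adjoint (B (t+L))
              (ContinuousLinearMap.adjoint (Φ (a+L) (t+L)) z)‖ ^ 2) (Set.Ioc 0 a) volume :=
            intG.congr_fun (fun t ht => hpt2 t ht) measurableSet_Ioc
          have int2 : IntegrableOn (fun t => ‖ContinuousLinearMap.adjoint (B t)
              (ContinuousLinearMap.adjoint (Φ (a+L) t) z)‖ ^ 2) (Set.Ioc L (a+L)) volume := by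
            have h3 : IntervalIntegrable (fun t => ‖ContinuousLinearMap.adjoint (B (t+L))
                (ContinuousLinearMap.adjoint (Φ (a+L) (t+L)) z)‖ ^ 2) volume 0 a :=
              (intervalIntegrable_iff_integrableOn_Ioc_of_le ha0.le).2 intShift
            have h4 := h3.comp_sub_right L
            simp only [sub_add_cancel, zero_add] at h4
            exact (intervalIntegrable_iff_integrableOn_Ioc_of_le (by linarith)).1 h4
          -- integral over second block equals the IH integral
          have intEq : (∫ t in Set.Ioc L (a+L), ‖ContinuousLinearMap.adjoint (B t)
                (ContinuousLinearMap.adjoint (Φ (a+L) t) z)‖ ^ 2) =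
              ∫ t in Set.Ioc (0:ℝ) a, ‖ContinuousLinearMap.adjoint (B t)
                (ContinuousLinearMap.adjoint (Φ a t) z)‖ ^ 2 := by
            have h5 := intervalIntegral.integral_comp_add_right
              (fun t => ‖ContinuousLinearMap.adjoint (B t)
                (ContinuousLinearMap.adjoint (Φ (a+L) t) z)‖ ^ 2) L (a := 0) (b := a)
            rw [zero_add] at h5
            calc (∫ t in Set.Ioc L (a+L), ‖ContinuousLinearMap.adjoint (B t)
                  (ContinuousLinearMap.adjoint (Φ (a+L) t) z)‖ ^ 2)
                = ∫ t in L..(a+L), ‖ContinuousLinearMap.adjoint (B t)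
                  (ContinuousLinearMap.adjoint (Φ (a+L) t) z)‖ ^ 2 :=
                  (intervalIntegral.integral_of_le (by linarith)).symm
              _ = ∫ t in (0:ℝ)..a, ‖ContinuousLinearMap.adjoint (B (t+L))
                  (ContinuousLinearMap.adjoint (Φ (a+L) (t+L)) z)‖ ^ 2 := h5.symm
              _ = ∫ t in Set.Ioc (0:ℝ) a, ‖ContinuousLinearMap.adjoint (B (t+L))
                  (ContinuousLinearMap.adjoint (Φ (a+L) (t+L)) z)‖ ^ 2 :=
                  intervalIntegral.integral_of_le ha0.le
              _ = ∫ t in Set.Ioc (0:ℝ) a, ‖ContinuousLinearMap.adjoint (B t)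
                  (ContinuousLinearMap.adjoint (Φ a t) z)‖ ^ 2 :=
                  setIntegral_congr_fun measurableSet_Ioc (fun t ht => (hpt2 t ht).symm)
          -- split the full integral
          have intUnion : IntegrableOn (fun t => ‖ContinuousLinearMap.adjoint (B t)
              (ContinuousLinearMap.adjoint (Φ (a+L) t) z)‖ ^ 2) (Set.Ioc 0 (a+L)) volume := by
            rw [← Set.Ioc_union_Ioc_eq_Ioc hL0.le (by linarith : L ≤ a + L)]
            exact int1.union int2
          have intSplit : (∫ t in Set.Ioc (0:ℝ) (a+L), ‖ContinuousLinearMap.adjoint (B t)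
                (ContinuousLinearMap.adjoint (Φ (a+L) t) z)‖ ^ 2) =
              (∫ t in Set.Ioc (0:ℝ) L, ‖ContinuousLinearMap.adjoint (B t)
                (ContinuousLinearMap.adjoint (Φ (a+L) t) z)‖ ^ 2) +
              ∫ t in Set.Ioc L (a+L), ‖ContinuousLinearMap.adjoint (B t)
                (ContinuousLinearMap.adjoint (Φ (a+L) t) z)‖ ^ 2 := by
            rw [← Set.Ioc_union_Ioc_eq_Ioc hL0.le (by linarith : L ≤ a + L)]
            exact setIntegral_union (Set.Ioc_disjoint_Ioc_of_le le_rfl) measurableSet_Ioc int1 int2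
          refine ⟨intUnion, ?_⟩
          -- the two inequalities
          have hbaseψ := hbase ψ
          have hIeq : (∫ t in Set.Ioc (0:ℝ) L, ‖ContinuousLinearMap.adjoint (B t)
                (ContinuousLinearMap.adjoint (Φ L t) ψ)‖ ^ 2) =
              ∫ t in Set.Ioc (0:ℝ) L, ‖ContinuousLinearMap.adjoint (B t)
                (ContinuousLinearMap.adjoint (Φ (a+L) t) z)‖ ^ 2 :=
            setIntegral_congr_fun measurableSet_Ioc (fun t ht => hpt1 t ht)
          rw [hIeq, ← happly] at hbaseψ
          -- hbaseψ : ‖adj (Φ L 0) ψ‖^2 ≤ 2δ²‖ψ‖² + 2C² ∫_{(0,L]} F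
          have hψle : ‖ψ‖ ^ 2 ≤ (2 * δ ^ 2) ^ k * ‖z‖ ^ 2 + 2 * C ^ 2 *
              ∫ t in Set.Ioc L (a+L), ‖ContinuousLinearMap.adjoint (B t)
                (ContinuousLinearMap.adjoint (Φ (a+L) t) z)‖ ^ 2 := by
            rw [intEq]; exact ineqG
          have hI2nonneg : 0 ≤ ∫ t in Set.Ioc L (a+L), ‖ContinuousLinearMap.adjoint (B t)
              (ContinuousLinearMap.adjoint (Φ (a+L) t) z)‖ ^ 2 :=
            setIntegral_nonneg measurableSet_Ioc (fun t _ => by positivity)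
          rw [intSplit, pow_succ (2 * δ ^ 2) k]
          have e1 : 2 * δ ^ 2 * ‖ψ‖ ^ 2 ≤ 2 * δ ^ 2 * ((2 * δ ^ 2) ^ k * ‖z‖ ^ 2 + 2 * C ^ 2 *
              ∫ t in Set.Ioc L (a+L), ‖ContinuousLinearMap.adjoint (B t)
                (ContinuousLinearMap.adjoint (Φ (a+L) t) z)‖ ^ 2) :=
            mul_le_mul_of_nonneg_left hψle h2δ0.le
          have e2 : 0 ≤ (1 - 2 * δ ^ 2) * (2 * C ^ 2 *
              ∫ t in Set.Ioc L (a+L), ‖ContinuousLinearMap.adjoint (B t)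
                (ContinuousLinearMap.adjoint (Φ (a+L) t) z)‖ ^ 2) :=
            mul_nonneg (by linarith) (mul_nonneg (by positivity) hI2nonneg)
          linarith [hbaseψ, e1, e2]
    intro k hk z
    have ecast : ((k * n : ℕ):ℝ) * T = (k:ℝ) * L := by rw [hLdef]; push_cast; ring
    rw [ecast]
    exact (main k hk z).2
  · -- contraction case: some observation is not integrable
    push_neg at hS
    obtain ⟨ψ0, hψ0⟩ := hS
    have step1 : ∀ ψ : Y, ¬ IntegrableOn
        (fun t => ‖ContinuousLinearMap.adjoint (B t)
          (ContinuousLinearMap.adjoint (Φ L t) ψ)‖ ^ 2) (Set.Ioc 0 L) volume →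
        ‖ContinuousLinearMap.adjoint (Φ L 0) ψ‖ ^ 2 ≤ 2 * δ ^ 2 * ‖ψ‖ ^ 2 := by
      intro ψ h
      have hb := hbase ψ
      rw [MeasureTheory.integral_undef h] at hb
      linarith
    have step2 : ∀ (ψ : Y) (c : ℝ), c ≠ 0 →
        IntegrableOn (fun t => ‖ContinuousLinearMap.adjoint (B t)
          (ContinuousLinearMap.adjoint (Φ L t) ψ)‖ ^ 2) (Set.Ioc 0 L) volume →
        IntegrableOn (fun t => ‖ContinuousLinearMap.adjoint (B t)
          (ContinuousLinearMap.adjoint (Φ L t) (ψ + c • ψ0))‖ ^ 2) (Set.Ioc 0 L) volume →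
        IntegrableOn (fun t => ‖ContinuousLinearMap.adjoint (B t)
          (ContinuousLinearMap.adjoint (Φ L t) (ψ - c • ψ0))‖ ^ 2) (Set.Ioc 0 L) volume →
        False := by
      intro ψ c hc h h1 h2
      apply hψ0
      have hcomb : IntegrableOn (fun t => (2 * c ^ 2)⁻¹ *
          ((‖ContinuousLinearMap.adjoint (B t)
              (ContinuousLinearMap.adjoint (Φ L t) (ψ + c • ψ0))‖ ^ 2 +
            ‖ContinuousLinearMap.adjoint (B t)
              (ContinuousLinearMap.adjoint (Φ L t) (ψ - c • ψ0))‖ ^ 2) -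
            2 * ‖ContinuousLinearMap.adjoint (B t)
              (ContinuousLinearMap.adjoint (Φ L t) ψ)‖ ^ 2)) (Set.Ioc 0 L) volume :=
        (((h1.add h2).sub (h.const_mul 2)).const_mul _)
      exact hcomb.congr_fun
        (fun t _ => (obs_polarization Φ B L t ψ ψ0 c hc).symm) measurableSet_Ioc
    have hcontr : ∀ ψ : Y,
        ‖ContinuousLinearMap.adjoint (Φ L 0) ψ‖ ^ 2 ≤ 2 * δ ^ 2 * ‖ψ‖ ^ 2 := by
      intro ψ
      by_cases hψ : IntegrableOn (fun t => ‖ContinuousLinearMap.adjoint (B t)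
          (ContinuousLinearMap.adjoint (Φ L t) ψ)‖ ^ 2) (Set.Ioc 0 L) volume
      · have hseq : ∀ m : ℕ, ∃ w : Y, ‖w - ψ‖ ≤ (1:ℝ)/(m+1) ∧
            ‖ContinuousLinearMap.adjoint (Φ L 0) w‖ ^ 2 ≤ 2 * δ ^ 2 * ‖w‖ ^ 2 := by
          intro m
          set c : ℝ := 1/((m+1)*(‖ψ0‖+1)) with hcdef
          have hc0 : 0 < c := by positivity
          have hdist : c * ‖ψ0‖ ≤ 1/(m+1) := by
            rw [hcdef, div_mul_eq_mul_div, one_mul]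
            rw [div_le_div_iff₀ (by positivity) (by positivity)]
            have h1 : (0:ℝ) < (m:ℝ)+1 := by positivity
            nlinarith [norm_nonneg ψ0]
          by_cases h1 : IntegrableOn (fun t => ‖ContinuousLinearMap.adjoint (B t)
              (ContinuousLinearMap.adjoint (Φ L t) (ψ + c • ψ0))‖ ^ 2) (Set.Ioc 0 L) volume
          · have h2 : ¬ IntegrableOn (fun t => ‖ContinuousLinearMap.adjoint (B t)
                (ContinuousLinearMap.adjoint (Φ L t) (ψ - c • ψ0))‖ ^ 2) (Set.Ioc 0 L) volume :=
              fun h2 => step2 ψ c hc0.ne' hψ h1 h2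
            refine ⟨ψ - c • ψ0, ?_, step1 _ h2⟩
            have : ψ - c • ψ0 - ψ = -(c • ψ0) := by abel
            rw [this, norm_neg, norm_smul]
            simpa [abs_of_pos hc0] using hdist
          · refine ⟨ψ + c • ψ0, ?_, step1 _ h1⟩
            have : ψ + c • ψ0 - ψ = c • ψ0 := by abel
            rw [this, norm_smul]
            simpa [abs_of_pos hc0] using hdist
        choose w hw1 hw2 using hseq
        have hwt : Tendsto w atTop (nhds ψ) := by
          rw [tendsto_iff_norm_sub_tendsto_zero]
          exact squeeze_zero (fun m => norm_nonneg _) hw1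
            tendsto_one_div_add_atTop_nhds_zero_nat
        have hcont1 : Continuous fun x : Y =>
            ‖ContinuousLinearMap.adjoint (Φ L 0) x‖ ^ 2 :=
          ((ContinuousLinearMap.adjoint (Φ L 0)).continuous.norm).pow 2
        have hcont2 : Continuous fun x : Y => 2 * δ ^ 2 * ‖x‖ ^ 2 :=
          continuous_const.mul (continuous_norm.pow 2)
        exact le_of_tendsto_of_tendsto' ((hcont1.tendsto ψ).comp hwt)
          ((hcont2.tendsto ψ).comp hwt) hw2
      · exact step1 ψ hψ
    have iter : ∀ k : ℕ, 0 < k → ∀ z : Y,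
        ‖ContinuousLinearMap.adjoint (Φ ((k:ℝ) * L) 0) z‖ ^ 2 ≤ (2 * δ ^ 2) ^ k * ‖z‖ ^ 2 := by
      intro k
      induction k with
      | zero => intro h; exact absurd h (lt_irrefl 0)
      | succ k ih =>
        intro _ z
        rcases Nat.eq_zero_or_pos k with hk0 | hk0
        · subst hk0
          have e1 : ((0+1 : ℕ):ℝ) * L = L := by norm_num
          rw [e1]
          simpa using hcontr z
        · set a : ℝ := (k:ℝ) * L with hadef
          have ha0 : 0 < a := by positivity
          have ecast : ((k+1 : ℕ):ℝ) * L = a + L := by push_cast [hadef]; ring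
          rw [ecast]
          have hsplit : Φ (a + L) 0 = (Φ (a+L) L).comp (Φ L 0) :=
            hcomp 0 L (a+L) le_rfl hL0.le (by linarith)
          have hperA : Φ (a+L) L = Φ a 0 := by
            have := hΦL 0 a le_rfl ha0.le
            simpa using this
          have happly : ContinuousLinearMap.adjoint (Φ (a+L) 0) z =
              ContinuousLinearMap.adjoint (Φ L 0)
                (ContinuousLinearMap.adjoint (Φ a 0) z) := by
            rw [hsplit, ContinuousLinearMap.adjoint_comp, hperA]
            rfl
          rw [happly]
          calc ‖ContinuousLinearMap.adjoint (Φ L 0)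
                (ContinuousLinearMap.adjoint (Φ a 0) z)‖ ^ 2
              ≤ 2 * δ ^ 2 * ‖ContinuousLinearMap.adjoint (Φ a 0) z‖ ^ 2 := hcontr _
            _ ≤ 2 * δ ^ 2 * ((2 * δ ^ 2) ^ k * ‖z‖ ^ 2) :=
                mul_le_mul_of_nonneg_left (ih hk0 z) h2δ0.le
            _ = (2 * δ ^ 2) ^ (k+1) * ‖z‖ ^ 2 := by rw [pow_succ]; ring
    intro k hk z
    have ecast : ((k * n : ℕ):ℝ) * T = (k:ℝ) * L := by rw [hLdef]; push_cast; ring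
    rw [ecast]
    have hI : 0 ≤ ∫ t in Set.Ioc (0:ℝ) ((k:ℝ) * L),
        ‖ContinuousLinearMap.adjoint (B t)
          (ContinuousLinearMap.adjoint (Φ ((k:ℝ) * L) t) z)‖ ^ 2 :=
      setIntegral_nonneg measurableSet_Ioc (fun t _ => by positivity)
    have h2C : 0 ≤ 2 * C ^ 2 * ∫ t in Set.Ioc (0:ℝ) ((k:ℝ) * L),
        ‖ContinuousLinearMap.adjoint (B t)
          (ContinuousLinearMap.adjoint (Φ ((k:ℝ) * L) t) z)‖ ^ 2 :=
      mul_nonneg (by positivity) hI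
    linarith [iter k hk z]
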